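/- Let 𝕜 be a commutative ring, k ≥ 2, and R = 𝕜[x_1,…,x_k]/(x_1x_2⋯x_k). For every 1 ≤ i ≤ k−1: (a) multiplication by x_{[i+1,k]} = x_{i+1}x_{i+2}⋯x_k on the R-module R/(x_{[1,i]}) is injective (i.e. x_{[i+1,k]} is a non-zero-divisor on R/(x_1⋯x_i)); and (b) the cokernel of this multiplication map, namely R/((x_{[1,i]}) + (x_{[i+1,k]})), is free as a 𝕜-module. -/

import Mathlib

open MvPolynomial

section MonomialIdeal

variable {σ : Type*} {𝕜 : Type*} [CommRing 𝕜]

/-- The upward closure of a set of exponent vectors. -/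
def upSet (D : Set (σ →₀ ℕ)) : Set (σ →₀ ℕ) := {e | ∃ d ∈ D, d ≤ e}

/-- The ideal of polynomials all of whose monomials lie in the upward closure of `D`. -/
def upIdeal (D : Set (σ →₀ ℕ)) : Ideal (MvPolynomial σ 𝕜) where
  carrier := {f | ∀ e ∈ f.support, e ∈ upSet D}
  zero_mem' := by simp
  add_mem' := by
    classical
    intro a b ha hb e he
    rcases Finset.mem_union.1 (MvPolynomial.support_add he) with h | h
    · exact ha e h
    · exact hb e h
  smul_mem' := by
    classical
    intro c f hf e he
    rw [smul_eq_mul] at he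
    have := MvPolynomial.support_mul c f he
    rcases Finset.mem_add.1 this with ⟨e₁, h₁, e₂, h₂, rfl⟩
    obtain ⟨d, hd, hde⟩ := hf e₂ h₂
    exact ⟨d, hd, hde.trans le_add_self⟩

lemma span_monomial_eq_upIdeal (D : Set (σ →₀ ℕ)) :
    Ideal.span ((fun d => (monomial d (1 : 𝕜) : MvPolynomial σ 𝕜)) '' D) = upIdeal D := by
  apply le_antisymm
  · rw [Ideal.span_le]
    rintro _ ⟨d, hd, rfl⟩ e he
    classical
    rw [MvPolynomial.support_monomial] at he
    rcases eq_or_ne (1 : 𝕜) 0 with h1 | h1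
    · simp [h1] at he
    · simp [h1] at he
      exact ⟨d, hd, he ▸ le_refl d⟩
  · intro f hf
    rw [← MvPolynomial.support_sum_monomial_coeff f]
    refine Ideal.sum_mem _ fun e he => ?_
    obtain ⟨d, hd, hde⟩ := hf e he
    have : (monomial e (coeff e f) : MvPolynomial σ 𝕜)
        = monomial (e - d) (coeff e f) * monomial d 1 := by
      rw [monomial_mul, tsub_add_cancel_of_le hde, mul_one]
    rw [this]
    exact Ideal.mul_mem_left _ _ (Ideal.subset_span ⟨d, hd, rfl⟩)

lemma mem_span_monomial_iff (D : Set (σ →₀ ℕ)) (f : MvPolynomial σ 𝕜) :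
    f ∈ Ideal.span ((fun d => (monomial d (1 : 𝕜) : MvPolynomial σ 𝕜)) '' D)
      ↔ ∀ e ∈ f.support, e ∈ upSet D := by
  rw [span_monomial_eq_upIdeal]; rfl

lemma restrictScalars_span_monomial (D : Set (σ →₀ ℕ)) :
    Submodule.restrictScalars 𝕜
        (Ideal.span ((fun d => (monomial d (1 : 𝕜) : MvPolynomial σ 𝕜)) '' D))
      = (Finsupp.supported 𝕜 𝕜 (upSet D)).comap
          (AddMonoidAlgebra.coeffLinearEquiv 𝕜 : MvPolynomial σ 𝕜 ≃ₗ[𝕜] _).toLinearMap := by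
  ext f
  rw [Submodule.restrictScalars_mem, mem_span_monomial_iff]
  exact Iff.rfl

lemma free_quot_span_monomial (D : Set (σ →₀ ℕ)) :
    Module.Free 𝕜 (MvPolynomial σ 𝕜 ⧸
      Ideal.span ((fun d => (monomial d (1 : 𝕜) : MvPolynomial σ 𝕜)) '' D)) := by
  classical
  set I := Ideal.span ((fun d => (monomial d (1 : 𝕜) : MvPolynomial σ 𝕜)) '' D) with hI
  set T := upSet D with hT
  let φ : ((σ →₀ ℕ) →₀ 𝕜) →ₗ[𝕜] Finsupp.supported 𝕜 𝕜 Tᶜ := Finsupp.restrictDom 𝕜 𝕜 Tᶜ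
  have hker : LinearMap.ker φ = Finsupp.supported 𝕜 𝕜 T := by
    ext f
    rw [LinearMap.mem_ker, Finsupp.mem_supported']
    constructor
    · intro h e he
      have := congrArg (fun g : Finsupp.supported 𝕜 𝕜 Tᶜ => (g : (σ →₀ ℕ) →₀ 𝕜) e) h
      simpa [φ, Finsupp.filter_apply, he] using this
    · intro h
      ext e
      by_cases he : e ∈ T
      · simp [φ, Finsupp.filter_apply, he]
      · simp [φ, Finsupp.filter_apply, he, h e he]
  have hsurj : Function.Surjective φ :=
    LinearMap.range_eq_top.1 (Finsupp.range_restrictDom Tᶜ)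
  have e3 : (((σ →₀ ℕ) →₀ 𝕜) ⧸ (Finsupp.supported 𝕜 𝕜 T)) ≃ₗ[𝕜] (↥Tᶜ →₀ 𝕜) :=
    (Submodule.quotientEquivOfIsCompl _ _ (IsCompl.of_eq
        (Finsupp.disjoint_supported_supported disjoint_compl_right).eq_bot
        (by rw [← Finsupp.supported_union, Set.union_compl_self, Finsupp.supported_univ]))).trans
        (Finsupp.supportedEquivFinsupp Tᶜ)
  have e2 : (MvPolynomial σ 𝕜 ⧸ Submodule.restrictScalars 𝕜 I)
      ≃ₗ[𝕜] (((σ →₀ ℕ) →₀ 𝕜) ⧸ (Finsupp.supported 𝕜 𝕜 T)) :=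
    (Submodule.quotEquivOfEq _ _ (restrictScalars_span_monomial D)).trans
        (Submodule.Quotient.equiv _ _
          (AddMonoidAlgebra.coeffLinearEquiv 𝕜 : MvPolynomial σ 𝕜 ≃ₗ[𝕜] _)
          (Submodule.map_comap_eq_of_surjective (LinearEquiv.surjective _) _))
  have e1 : (MvPolynomial σ 𝕜 ⧸ I) ≃ₗ[𝕜] (MvPolynomial σ 𝕜 ⧸ Submodule.restrictScalars 𝕜 I) :=
    (Submodule.Quotient.restrictScalarsEquiv 𝕜 I).symm
  exact Module.Free.of_equiv (e1.trans (e2.trans e3)).symm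

lemma monomial_mul_mem_span {c d : σ →₀ ℕ} (hdisj : ∀ s, d s ≠ 0 → c s = 0)
    {g : MvPolynomial σ 𝕜}
    (h : (monomial c 1 : MvPolynomial σ 𝕜) * g ∈ Ideal.span {(monomial d (1 : 𝕜) :
      MvPolynomial σ 𝕜)}) :
    g ∈ Ideal.span {(monomial d (1 : 𝕜) : MvPolynomial σ 𝕜)} := by
  rw [show ({(monomial d (1 : 𝕜) : MvPolynomial σ 𝕜)} : Set (MvPolynomial σ 𝕜))
      = (fun d => (monomial d (1 : 𝕜) : MvPolynomial σ 𝕜)) '' {d} by simp,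
    mem_span_monomial_iff] at h ⊢
  intro e he
  have hcoeff : coeff (c + e) ((monomial c 1 : MvPolynomial σ 𝕜) * g) = coeff e g := by
    rw [coeff_monomial_mul, one_mul]
  have hmem : (c + e) ∈ ((monomial c 1 : MvPolynomial σ 𝕜) * g).support := by
    rw [MvPolynomial.mem_support_iff, hcoeff]
    exact MvPolynomial.mem_support_iff.1 he
  obtain ⟨d', hd', hle⟩ := h _ hmem
  rw [Set.mem_singleton_iff] at hd'
  rw [hd'] at hle
  refine ⟨d, rfl, ?_⟩
  rw [Finsupp.le_def]
  intro s
  by_cases hds : d s = 0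
  · simp [hds]
  · have := hle s
    simp only [Finsupp.add_apply] at this
    rw [hdisj s hds] at this
    simpa using this

lemma prod_X_eq (S : Finset σ) :
    (∏ t ∈ S, (X t : MvPolynomial σ 𝕜))
      = monomial (∑ t ∈ S, Finsupp.single t 1) 1 := by
  classical
  induction S using Finset.cons_induction with
  | empty => simp
  | cons a s ha ih =>
    rw [Finset.prod_cons, ih, Finset.sum_cons, X, monomial_mul, one_mul]

lemma sum_single_apply (S : Finset σ) (s : σ) [DecidableEq σ] :
    (∑ t ∈ S, Finsupp.single t (1 : ℕ)) s = if s ∈ S then 1 else 0 := by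
  rw [Finset.sum_apply']
  simp only [Finsupp.single_apply]
  rw [Finset.sum_ite_eq' S s (fun _ => (1:ℕ))]

end MonomialIdeal


section Generic

variable {R : Type*} [CommRing R]

lemma inj_lsmul_quot (I : Ideal R) (a : R) (h : ∀ x, a * x ∈ I → x ∈ I) :
    Function.Injective (LinearMap.lsmul R (R ⧸ I) a) := by
  rw [← LinearMap.ker_eq_bot, eq_bot_iff]
  intro x hx
  obtain ⟨y, rfl⟩ := Submodule.Quotient.mk_surjective _ x
  have hx' : (LinearMap.lsmul R (R ⧸ I) a) (Submodule.Quotient.mk y) = 0 :=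
    LinearMap.mem_ker.1 hx
  rw [LinearMap.lsmul_apply, ← Submodule.Quotient.mk_smul, Submodule.Quotient.mk_eq_zero,
    smul_eq_mul] at hx'
  rw [Submodule.mem_bot, Submodule.Quotient.mk_eq_zero]
  exact h y hx'

lemma coker_lsmul_equiv (a b : R) :
    Nonempty (((R ⧸ Ideal.span {a}) ⧸
        LinearMap.range (LinearMap.lsmul R (R ⧸ Ideal.span {a}) b))
      ≃ₗ[R] R ⧸ (Ideal.span {a} ⊔ Ideal.span {b})) := by
  have h_range : LinearMap.range (LinearMap.lsmul R (R ⧸ Ideal.span {a}) b)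
      = Submodule.map (Ideal.span {a} : Ideal R).mkQ (Ideal.span {b}) := by
    ext x
    simp only [LinearMap.mem_range, Submodule.mem_map, LinearMap.lsmul_apply]
    constructor
    · rintro ⟨m, rfl⟩
      obtain ⟨y, rfl⟩ := Submodule.Quotient.mk_surjective _ m
      refine ⟨y * b, Ideal.mem_span_singleton'.2 ⟨y, rfl⟩, ?_⟩
      rw [Submodule.mkQ_apply, mul_comm, ← smul_eq_mul, Submodule.Quotient.mk_smul]
    · rintro ⟨z, hz, rfl⟩
      obtain ⟨y, rfl⟩ := Ideal.mem_span_singleton'.1 hz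
      refine ⟨Submodule.Quotient.mk y, ?_⟩
      rw [Submodule.mkQ_apply, mul_comm, ← smul_eq_mul, Submodule.Quotient.mk_smul]
  exact ⟨(Submodule.quotEquivOfEq _ _ h_range).trans
    (Submodule.quotientQuotientEquivQuotientSup _ _)⟩

end Generic

/-- The ring `R = 𝕜[x₁,…,x_k]/(x₁x₂⋯x_k)`, with variables indexed by `Fin k`
(the variable `x_m` of the paper, `1 ≤ m ≤ k`, corresponds to the index
`m - 1 : Fin k`). -/
abbrev NodalRing (𝕜 : Type*) [CommRing 𝕜] (k : ℕ) : Type _ :=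
  MvPolynomial (Fin k) 𝕜 ⧸
    Ideal.span {∏ i : Fin k, (X i : MvPolynomial (Fin k) 𝕜)}

/-- `x_{[a,b]}`: the image in `R` of the monomial `∏_{a ≤ m ≤ b} x_m`
(an empty product is `1`). -/
noncomputable def xIcc (𝕜 : Type*) [CommRing 𝕜] (k a b : ℕ) : NodalRing 𝕜 k :=
  Ideal.Quotient.mk _
    (∏ t ∈ Finset.univ.filter (fun t : Fin k => a ≤ (t : ℕ) + 1 ∧ (t : ℕ) + 1 ≤ b),
      X t)

/-- **Regularity of `x_{[i+1,k]}` on `R/(x_{[1,i]})` and freeness of the quotient.**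
For `1 ≤ i ≤ k-1`: multiplication by `x_{[i+1,k]}` on `R/(x_{[1,i]})` is injective,
its cokernel is `R/((x_{[1,i]}) + (x_{[i+1,k]}))`, and the latter is free as a
`𝕜`-module. -/
theorem stmt_11 (𝕜 : Type*) [CommRing 𝕜] (k : ℕ) (hk : 2 ≤ k)
    (i : ℕ) (hi : 1 ≤ i) (hik : i ≤ k - 1) :
    Function.Injective
      (LinearMap.lsmul (NodalRing 𝕜 k)
        (NodalRing 𝕜 k ⧸ Ideal.span {xIcc 𝕜 k 1 i}) (xIcc 𝕜 k (i + 1) k)) ∧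
    Nonempty
      (((NodalRing 𝕜 k ⧸ Ideal.span {xIcc 𝕜 k 1 i}) ⧸
          LinearMap.range
            (LinearMap.lsmul (NodalRing 𝕜 k)
              (NodalRing 𝕜 k ⧸ Ideal.span {xIcc 𝕜 k 1 i}) (xIcc 𝕜 k (i + 1) k)))
        ≃ₗ[NodalRing 𝕜 k]
        (NodalRing 𝕜 k ⧸
          (Ideal.span {xIcc 𝕜 k 1 i} ⊔ Ideal.span {xIcc 𝕜 k (i + 1) k}))) ∧
    Module.Free 𝕜
      (NodalRing 𝕜 k ⧸
        (Ideal.span {xIcc 𝕜 k 1 i} ⊔ Ideal.span {xIcc 𝕜 k (i + 1) k})) := by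
  classical
  set dA : Fin k →₀ ℕ :=
    ∑ t ∈ Finset.univ.filter (fun t : Fin k => (t : ℕ) < i), Finsupp.single t 1 with hdA
  set dB : Fin k →₀ ℕ :=
    ∑ t ∈ Finset.univ.filter (fun t : Fin k => ¬ (t : ℕ) < i), Finsupp.single t 1 with hdB
  set F : MvPolynomial (Fin k) 𝕜 := ∏ t : Fin k, X t with hFdef
  set p' : MvPolynomial (Fin k) 𝕜 := monomial dA 1 with hp'
  set q' : MvPolynomial (Fin k) 𝕜 := monomial dB 1 with hq'
  have hsum : dA + dB = ∑ t : Fin k, Finsupp.single t 1 := by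
    rw [hdA, hdB, Finset.sum_filter_add_sum_filter_not]
  have hF : F = monomial (dA + dB) 1 := by rw [hFdef, prod_X_eq, hsum]
  have hpq : F = p' * q' := by
    rw [hF, hp', hq', monomial_mul, one_mul]
  have hxA : xIcc 𝕜 k 1 i = Ideal.Quotient.mk _ p' := by
    have hfilt : Finset.univ.filter (fun t : Fin k => 1 ≤ (t : ℕ) + 1 ∧ (t : ℕ) + 1 ≤ i)
        = Finset.univ.filter (fun t : Fin k => (t : ℕ) < i) := by
      apply Finset.filter_congr
      intro t _
      constructor <;> intro h <;> omega
    rw [xIcc, hfilt]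
    exact congrArg _ (prod_X_eq _)
  have hxB : xIcc 𝕜 k (i + 1) k = Ideal.Quotient.mk _ q' := by
    have hfilt : Finset.univ.filter
          (fun t : Fin k => i + 1 ≤ (t : ℕ) + 1 ∧ (t : ℕ) + 1 ≤ k)
        = Finset.univ.filter (fun t : Fin k => ¬ (t : ℕ) < i) := by
      apply Finset.filter_congr
      intro t _
      have := t.isLt
      constructor <;> intro h <;> omega
    rw [xIcc, hfilt]
    exact congrArg _ (prod_X_eq _)
  have hdisjAB : ∀ s, dA s ≠ 0 → dB s = 0 := by
    intro s hs
    rw [hdA, sum_single_apply] at hs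
    rw [hdB, sum_single_apply]
    simp only [Finset.mem_filter, Finset.mem_univ, true_and] at hs ⊢
    by_cases h : (s : ℕ) < i
    · simp [h]
    · simp [h] at hs
  -- F belongs to both relevant ideals
  have hFp : F ∈ Ideal.span {p'} := by
    rw [hpq]
    exact Ideal.mul_mem_right _ _ (Ideal.subset_span rfl)
  have hFpq : F ∈ Ideal.span {p', q'} := by
    rw [hpq]
    exact Ideal.mul_mem_left _ _ (Ideal.subset_span (by simp))
  have hmapA : Ideal.span {xIcc 𝕜 k 1 i}
      = (Ideal.span {p'}).map (Ideal.Quotient.mk (Ideal.span {F})) := by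
    rw [Ideal.map_span, Set.image_singleton, hxA]
  refine ⟨?_, ?_, ?_⟩
  · -- injectivity
    apply inj_lsmul_quot
    intro x hx
    obtain ⟨g, rfl⟩ := Ideal.Quotient.mk_surjective x
    rw [hxB, ← map_mul, hmapA, Ideal.mem_quotient_iff_mem_sup] at hx
    have hsup : Ideal.span {p'} ⊔ Ideal.span {F} = Ideal.span {p'} :=
      sup_eq_left.2 (Ideal.span_le.2 (Set.singleton_subset_iff.2 hFp))
    rw [hsup] at hx
    have hg : g ∈ Ideal.span {p'} := monomial_mul_mem_span hdisjAB hx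
    rw [hmapA]
    exact Ideal.mem_map_of_mem _ hg
  · exact coker_lsmul_equiv _ _
  · -- freeness
    have hfreeP : Module.Free 𝕜 (MvPolynomial (Fin k) 𝕜 ⧸ Ideal.span {p', q'}) := by
      have := free_quot_span_monomial (𝕜 := 𝕜) ({dA, dB} : Set (Fin k →₀ ℕ))
      rwa [Set.image_pair] at this
    have hmk : (Ideal.span {p', q'}).map (Ideal.Quotient.mkₐ 𝕜 (Ideal.span {F}))
        = (Ideal.span {p', q'}).map (Ideal.Quotient.mk (Ideal.span {F})) := by
      simp only [Ideal.map_span, Ideal.Quotient.mkₐ_eq_mk]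
    have hJmap : Ideal.span {xIcc 𝕜 k 1 i} ⊔ Ideal.span {xIcc 𝕜 k (i + 1) k}
        = (Ideal.span {p', q'}).map (Ideal.Quotient.mk (Ideal.span {F})) := by
      rw [← Ideal.span_union, Set.singleton_union, Ideal.map_span, Set.image_pair,
        hxA, hxB]
    have e0 : (NodalRing 𝕜 k ⧸
          (Ideal.span {xIcc 𝕜 k 1 i} ⊔ Ideal.span {xIcc 𝕜 k (i + 1) k}))
        ≃ₐ[𝕜] (NodalRing 𝕜 k ⧸
          (Ideal.span {p', q'}).map (Ideal.Quotient.mkₐ 𝕜 (Ideal.span {F}))) :=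
      Ideal.quotientEquivAlgOfEq 𝕜 (hJmap.trans hmk.symm)
    have e1 : (NodalRing 𝕜 k ⧸
          (Ideal.span {p', q'}).map (Ideal.Quotient.mkₐ 𝕜 (Ideal.span {F})))
        ≃ₐ[𝕜] (MvPolynomial (Fin k) 𝕜 ⧸ (Ideal.span {F} ⊔ Ideal.span {p', q'})) :=
      DoubleQuot.quotQuotEquivQuotSupₐ 𝕜 _ _
    have e2 : (MvPolynomial (Fin k) 𝕜 ⧸ (Ideal.span {F} ⊔ Ideal.span {p', q'}))
        ≃ₐ[𝕜] (MvPolynomial (Fin k) 𝕜 ⧸ Ideal.span {p', q'}) :=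
      Ideal.quotientEquivAlgOfEq 𝕜
        (sup_eq_right.2 (Ideal.span_le.2 (Set.singleton_subset_iff.2 hFpq)))
    exact Module.Free.of_equiv ((e0.trans (e1.trans e2)).symm.toLinearEquiv)
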